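/- Let G be a directed acyclic graph on a finite vertex set V satisfying Assumption 1 (A ↦ Y). Suppose M_i ∈ M(G) ∖ {Y} fails the M-criterion, and let (M_{i_1},…,M_{i_k}) be a topological ordering of Ch(M_i,G) ∩ M(G). Then one of the following graphical configurations holds in G: (M-a) M_{i_m} and M_{i_r} are not adjacent for some m ≠ r in {1,…,k}; (M-b) there exist r ∈ {1,…,k} and B_j ∈ ({A} ∪ O(G) ∪ M(G)) ∖ {M_i} such that M_i → M_{i_r} ← B_j is in G and M_i ∉ Adj(B_j,G); (M-c) there exist r ∈ {1,…,k} and B_j ∈ ({A} ∪ O(G) ∪ M(G)) ∖ {M_i} with B_j → M_i in G and B_j ∉ Pa(M_{i_r},G) ∪ {M_{i_r}}, and a path p = ⟨B_j, …, S⟩ with S ∈ ({A,Y} ∪ O_min(G)) ∖ Pa(M_{i_r},G) that is d-connecting given Pa(M_{i_r},G) (if B_j ∈ {A,Y} ∪ O_min(G) then B_j = S and p has length 0). -/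

import Mathlib

open scoped Classical

noncomputable section

namespace Causal

/-- A directed graph on vertex type `V`, given by its edge relation. -/
structure Digraph (V : Type) where
  Edge : V → V → Prop

namespace Digraph

variable {V : Type}

/-- A directed graph is acyclic if there is no directed cycle. -/
def Acyclic (G : Digraph V) : Prop := ∀ v, ¬ Relation.TransGen G.Edge v v

/-- `G.anc u v` : `u` is an ancestor of `v` (`u ↦ v`), i.e. `u = v` or there is a
directed path from `u` to `v`. -/
def anc (G : Digraph V) (u v : V) : Prop := Relation.ReflTransGen G.Edge u v

/-- Parents of a vertex. -/
def paSet (G : Digraph V) (v : V) : Set V := {u | G.Edge u v}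

/-- Children of a vertex. -/
def chSet (G : Digraph V) (v : V) : Set V := {u | G.Edge v u}

/-- Adjacent vertices. -/
def adjSet (G : Digraph V) (v : V) : Set V := G.paSet v ∪ G.chSet v

/-- Ancestors of a vertex (including itself). -/
def anSet (G : Digraph V) (v : V) : Set V := {u | G.anc u v}

/-- Descendants of a vertex (including itself). -/
def deSet (G : Digraph V) (v : V) : Set V := {u | G.anc v u}

/-- Parents of a set of vertices. -/
def paOf (G : Digraph V) (S : Set V) : Set V := ⋃ v ∈ S, G.paSet v

/-- Ancestors of a set of vertices. -/
def anOf (G : Digraph V) (S : Set V) : Set V := ⋃ v ∈ S, G.anSet v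

/-- Descendants of a set of vertices. -/
def deOf (G : Digraph V) (S : Set V) : Set V := ⋃ v ∈ S, G.deSet v

/-- A path in `G` : a sequence of `n+1` distinct vertices, consecutive ones joined by an
edge of `G` in either direction.  Paths in the usual sense have `1 ≤ n`; `n = 0` is the
degenerate one-vertex path. -/
structure GPath (G : Digraph V) where
  n : ℕ
  vert : ℕ → V
  inj : ∀ i j, i ≤ n → j ≤ n → vert i = vert j → i = j
  adj : ∀ i, i < n → G.Edge (vert i) (vert (i + 1)) ∨ G.Edge (vert (i + 1)) (vert i)

namespace GPath

variable {G : Digraph V}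

/-- First vertex of a path. -/
def first (p : G.GPath) : V := p.vert 0

/-- Last vertex of a path. -/
def last (p : G.GPath) : V := p.vert p.n

/-- `v` lies on the path `p`. -/
def Mem (p : G.GPath) (v : V) : Prop := ∃ i, i ≤ p.n ∧ p.vert i = v

/-- The (interior) vertex at position `i` of `p` is a collider: both incident edges on the
path point into it. -/
def IsCollider (p : G.GPath) (i : ℕ) : Prop :=
  0 < i ∧ i < p.n ∧ G.Edge (p.vert (i - 1)) (p.vert i) ∧ G.Edge (p.vert (i + 1)) (p.vert i)

/-- A path is causal if all edges point towards its last vertex. -/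
def Causal (p : G.GPath) : Prop := ∀ i, i < p.n → G.Edge (p.vert i) (p.vert (i + 1))

/-- A path is blocked by `C` if some non-collider on it lies in `C`, or some collider on it
is not an ancestor of `C`. -/
def Blocked (p : G.GPath) (C : Set V) : Prop :=
  (∃ i, 0 < i ∧ i < p.n ∧ ¬ p.IsCollider i ∧ p.vert i ∈ C) ∨
  (∃ i, p.IsCollider i ∧ p.vert i ∉ G.anOf C)

end GPath

/-- d-separation: every path between a vertex of `S \ C` and a vertex of `T \ C` is blocked
by `C`.  It holds by convention when `S \ C` or `T \ C` is empty. -/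
def dsep (G : Digraph V) (S T C : Set V) : Prop :=
  ∀ s ∈ S \ C, ∀ t ∈ T \ C, ∀ p : G.GPath,
    1 ≤ p.n → p.first = s → p.last = t → p.Blocked C

/-- `l` is a topological ordering of the vertex set `S` : it enumerates `S` without
repetitions so that no later vertex is an ancestor of an earlier one. -/
def IsTopoOrd (G : Digraph V) (S : Set V) (l : List V) : Prop :=
  l.Nodup ∧ (∀ v, v ∈ l ↔ v ∈ S) ∧ l.Pairwise fun a b => ¬ G.anc b a

/-- There is a directed path from `u` to `v` avoiding the vertex `A` (a trivial such path
when `u = v`). -/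
def AvoidReach (G : Digraph V) (A u v : V) : Prop :=
  Relation.ReflTransGen (fun a b => G.Edge a b ∧ a ≠ A ∧ b ≠ A) u v

/-- `N(G)` : non-ancestors of the outcome `Y`. -/
def Nset (G : Digraph V) (A Y : V) : Set V := {v | ¬ G.anc v Y}

/-- `I(G)` : indirect ancestors of `Y`, i.e. vertices `v ≠ A` that are ancestors of `Y`
such that every directed path from `v` to `Y` contains `A`. -/
def Iset (G : Digraph V) (A Y : V) : Set V :=
  {v | v ≠ A ∧ G.anc v Y ∧ ¬ G.AvoidReach A v Y}

/-- `W(G)` : baseline covariates. -/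
def Wset (G : Digraph V) (A Y : V) : Set V :=
  {v | ¬ G.anc A v ∧ G.anc v Y ∧ v ∉ G.Iset A Y}

/-- `M(G)` : mediators (including `Y`). -/
def Mset (G : Digraph V) (A Y : V) : Set V := {v | v ≠ A ∧ G.anc A v ∧ G.anc v Y}

/-- `O(G)` : the optimal adjustment set. -/
def Oset (G : Digraph V) (A Y : V) : Set V := G.paOf (G.Mset A Y) \ (G.Mset A Y ∪ {A})

/-- `O_min(G)` : the inclusion-minimal subset `O' ⊆ O(G)` with `A ⫫ O(G) \ O' | O'`
(realized as the intersection of all such subsets). -/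
def Omin (G : Digraph V) (A Y : V) : Set V :=
  ⋂₀ {O' | O' ⊆ G.Oset A Y ∧ G.dsep {A} (G.Oset A Y \ O') O'}

end Digraph

/-- `chainD Wj l t` : the `t`-th element of the chain `(W_{j_0} = Wj, W_{j_1}, …, W_{j_r})`
where `l = [W_{j_1}, …, W_{j_r}]`. -/
def chainD {V : Type} (Wj : V) (l : List V) (t : ℕ) : V := (Wj :: l).getD t Wj

namespace Digraph

variable {V : Type}

/-- The W-criterion for a vertex `Wj ∈ W(G) \ O(G)`. -/
def WCrit (G : Digraph V) (A Y Wj : V) : Prop :=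
  ∀ l : List V, G.IsTopoOrd (G.chSet Wj ∩ G.Wset A Y) l →
    l ≠ [] ∧
      G.dsep {Wj} (G.Oset A Y)
        (insert (chainD Wj l l.length) (G.paSet (chainD Wj l l.length)) \ {Wj}) ∧
      ∀ t, t < l.length →
        G.Edge (chainD Wj l t) (chainD Wj l (t + 1)) ∧
        G.paSet (chainD Wj l (t + 1)) ⊆ insert (chainD Wj l t) (G.paSet (chainD Wj l t)) ∧
        G.dsep (G.paSet (chainD Wj l t) \ G.paSet (chainD Wj l (t + 1))) (G.Oset A Y)
          (G.paSet (chainD Wj l (t + 1)))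

/-- The M-criterion for a vertex `Mi ∈ M(G) \ {Y}`. -/
def MCrit (G : Digraph V) (A Y Mi : V) : Prop :=
  ∀ l : List V, G.IsTopoOrd (G.chSet Mi ∩ G.Mset A Y) l →
    l ≠ [] ∧
      G.dsep {Mi} (insert A (insert Y (G.Omin A Y)))
        (insert (chainD Mi l l.length) (G.paSet (chainD Mi l l.length)) \ {Mi}) ∧
      ∀ t, t < l.length →
        G.Edge (chainD Mi l t) (chainD Mi l (t + 1)) ∧
        G.paSet (chainD Mi l (t + 1)) ⊆ insert (chainD Mi l t) (G.paSet (chainD Mi l t)) ∧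
        G.dsep (G.paSet (chainD Mi l t) \ G.paSet (chainD Mi l (t + 1)))
          (insert A (insert Y (G.Omin A Y))) (G.paSet (chainD Mi l (t + 1)))

/-- `V*(G)` : the irreducible informative vertex set. -/
def Vstar (G : Digraph V) (A Y : V) : Set V :=
  insert A (insert Y (G.Oset A Y ∪
    {w | w ∈ G.Wset A Y ∧ w ∉ G.Oset A Y ∧ ¬ G.WCrit A Y w} ∪
    {m | m ∈ G.Mset A Y ∧ m ≠ Y ∧ ¬ G.MCrit A Y m}))

/-- The projection `G_{−v,π}` : saturate all edges from `Pa(v,G) ∪ {v, π_1, …, π_{j−1}}`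
into `π_j`, then delete `v` and its incident edges. -/
def proj (G : Digraph V) (v : V) (π : List V) : Digraph V where
  Edge a b :=
    a ≠ v ∧ b ≠ v ∧
      (G.Edge a b ∨ ∃ j, j < π.length ∧ b = π.getD j v ∧
        (G.Edge a v ∨ ∃ j', j' < j ∧ a = π.getD j' v))

/-- There is a directed path from `u` to `v` all of whose non-endpoint vertices lie
in `I` (this includes a plain edge `u → v`). -/
def connVia (G : Digraph V) (I : Set V) (u v : V) : Prop :=
  ∃ w, Relation.ReflTransGen (fun a b => G.Edge a b ∧ b ∈ I) u w ∧ G.Edge w v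

/-- The reduced graph `G⁰` on `V⁰ = V \ (N(G) ∪ I(G))` : connect across `I(G)` and delete
the vertices of `N(G) ∪ I(G)`. -/
def reduce0 (G : Digraph V) (A Y : V) : Digraph V where
  Edge u v :=
    u ∉ G.Nset A Y ∪ G.Iset A Y ∧ v ∉ G.Nset A Y ∪ G.Iset A Y ∧
      G.connVia (G.Iset A Y) u v

/-- The induced subgraph on a vertex set `S`. -/
def induce (G : Digraph V) (S : Set V) : Digraph {v // v ∈ S} where
  Edge a b := G.Edge a.1 b.1

/-- `π` is the projection ordering used when projecting `v` out of the current graph `H`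
(vertex classes taken with respect to the reference graph `Gref`): for `v ∈ W(Gref)` it is a
topological ordering of the children of `v` in `H` lying in `W(Gref)`, followed by `A` if `A`
is a child of `v` in `H`; for `v ∈ M(Gref)` it is a topological ordering of all children
of `v` in `H`. -/
def PiOrd (Gref : Digraph V) (A Y : V) (H : Digraph V) (v : V) (π : List V) : Prop :=
  (v ∈ Gref.Wset A Y ∧
    ∃ l, H.IsTopoOrd (H.chSet v ∩ Gref.Wset A Y) l ∧
      π = l ++ if H.Edge v A then [A] else []) ∨
  (v ∈ Gref.Mset A Y ∧ H.IsTopoOrd (H.chSet v) π)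

/-- One step of the graph-reduction algorithm: visit `v` in the current graph `H`; if `v`
satisfies the W- (resp. M-) criterion in `G` it is projected out, otherwise nothing happens. -/
def AlgStep (G : Digraph V) (A Y : V) (H : Digraph V) (v : V) (H' : Digraph V) : Prop :=
  (v ∈ G.Wset A Y ∧ G.WCrit A Y v ∧
    ∃ l, H.IsTopoOrd (H.chSet v ∩ G.Wset A Y) l ∧
      H' = H.proj v (l ++ if H.Edge v A then [A] else [])) ∨
  (v ∈ G.Mset A Y ∧ G.MCrit A Y v ∧
    ∃ l, H.IsTopoOrd (H.chSet v) l ∧ H' = H.proj v l) ∨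
  (¬ (v ∈ G.Wset A Y ∧ G.WCrit A Y v) ∧ ¬ (v ∈ G.Mset A Y ∧ G.MCrit A Y v) ∧ H' = H)

/-- A run of the graph-reduction algorithm through the list of vertices `l`. -/
inductive AlgRun (G : Digraph V) (A Y : V) : Digraph V → List V → Digraph V → Prop
  | nil (H : Digraph V) : AlgRun G A Y H [] H
  | cons {H H' H'' : Digraph V} {v : V} {l : List V} :
      G.AlgStep A Y H v H' → AlgRun G A Y H' l H'' → AlgRun G A Y H (v :: l) H''

/-- `H` is an output of the graph-reduction algorithm applied to `G` : starting from the
reduced graph `G⁰`, visit each vertex of `V⁰ \ ({A,Y} ∪ O(G))` exactly once, in any order. -/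
def IsAlgOutput (G : Digraph V) (A Y : V) (H : Digraph V) : Prop :=
  ∃ l : List V, l.Nodup ∧
    (∀ v, v ∈ l ↔ (v ∉ G.Nset A Y ∪ G.Iset A Y ∧ v ∉ insert A (insert Y (G.Oset A Y)))) ∧
    G.AlgRun A Y (G.reduce0 A Y) l H

/-- Markov equivalence: same adjacencies and the same unshielded colliders. -/
def MarkovEquiv (G G' : Digraph V) : Prop :=
  (∀ u v, u ∈ G.adjSet v ↔ u ∈ G'.adjSet v) ∧
  ∀ u w v, (G.Edge u w ∧ G.Edge v w ∧ u ≠ v ∧ u ∉ G.adjSet v) ↔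
    (G'.Edge u w ∧ G'.Edge v w ∧ u ≠ v ∧ u ∉ G'.adjSet v)

end Digraph

/-- `p` is a shortest causal path from `v` to the set `S` (of length `0` if `v ∈ S`). -/
def IsShortestCausalTo {V : Type} (G : Digraph V) (p : G.GPath) (v : V) (S : Set V) : Prop :=
  p.Causal ∧ p.first = v ∧ p.last ∈ S ∧
    ∀ q : G.GPath, q.Causal → q.first = v → q.last ∈ S → p.n ≤ q.n

/-- Length of a shortest causal path from `v` to the set `D`. -/
def causalDist {V : Type} (G : Digraph V) (v : V) (D : Set V) : ℕ :=
  sInf {n | ∃ q : G.GPath, q.Causal ∧ q.first = v ∧ q.last ∈ D ∧ q.n = n}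

/-- The distance-to-`D` of a path: the sum over its colliders `C_h` of `|c_h| + 1`, where
`c_h` is a shortest causal path from `C_h` to `D`. -/
def Digraph.GPath.distTo {V : Type} {G : Digraph V} (p : G.GPath) (D : Set V) : ℕ :=
  ∑ i ∈ Finset.range (p.n + 1),
    if p.IsCollider i then causalDist G (p.vert i) D + 1 else 0

/-- A `Fintype` instance for subtypes of sets over a finite type. -/
noncomputable instance instFintypeMemSet {α : Type} [Finite α] (S : Set α) :
    Fintype {x // x ∈ S} := Set.Finite.fintype (Set.toFinite S)

end Causal

namespace Causal
namespace Digraph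
variable {V : Type} {G : Digraph V} {A Y : V}

lemma acyc_no_anc_edge (hG : G.Acyclic) {a b : V} (h : G.anc a b) (e : G.Edge b a) : False :=
  hG a (Relation.TransGen.tail' h e)

lemma acyc_anc_antisymm (hG : G.Acyclic) {a b : V} (h1 : G.anc a b) (h2 : G.anc b a) : a = b := by
  by_contra hne
  rcases (Relation.ReflTransGen.cases_head h2) with h | ⟨c, hbc, hca⟩
  · exact hne h.symm
  · exact hG b (Relation.TransGen.head' hbc (hca.trans h1))

lemma anc_of_edge {a b : V} (e : G.Edge a b) : G.anc a b := Relation.ReflTransGen.single e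

lemma mem_Mset_iff {v : V} : v ∈ G.Mset A Y ↔ v ≠ A ∧ G.anc A v ∧ G.anc v Y := Iff.rfl

lemma parent_mem_big {B m : V} (hm : m ∈ G.Mset A Y) (e : G.Edge B m) :
    B ∈ insert A (G.Oset A Y ∪ G.Mset A Y) := by
  by_cases hBA : B = A
  · exact hBA ▸ Set.mem_insert _ _
  by_cases hBM : B ∈ G.Mset A Y
  · exact Set.mem_insert_of_mem _ (Or.inr hBM)
  · refine Set.mem_insert_of_mem _ (Or.inl ?_)
    refine ⟨?_, ?_⟩
    · exact Set.mem_biUnion hm e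
    · rintro (h | h)
      · exact hBM h
      · exact hBA h

lemma anc_Y_of_parent_mset {B m : V} (hm : m ∈ G.Mset A Y) (e : G.Edge B m) : G.anc B Y :=
  (Relation.ReflTransGen.single e).trans hm.2.2

lemma Oset_subset_ancY {v : V} (hv : v ∈ G.Oset A Y) : G.anc v Y := by
  obtain ⟨h1, _⟩ := hv
  simp only [paOf, Set.mem_iUnion] at h1
  obtain ⟨m, hm, he⟩ := h1
  exact anc_Y_of_parent_mset hm he

lemma Omin_subset_Oset : G.Omin A Y ⊆ G.Oset A Y := by
  intro x hx
  refine hx (G.Oset A Y) ⟨subset_rfl, ?_⟩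
  intro s hs t ht
  exact absurd ht.1 (by simp [ht.2])

lemma mem_anOf {x : V} {C : Set V} : x ∈ G.anOf C ↔ ∃ c ∈ C, G.anc x c := by
  simp [anOf, anSet]

lemma anOf_trans {x c : V} (h : G.anc x c) (hc : G.anc c Y) : G.anc x Y := h.trans hc

lemma anc_decompose {d c : V} (h : G.anc d c) (hne : d ≠ c) :
    ∃ u, G.anc d u ∧ G.Edge u c := by
  rcases Relation.ReflTransGen.cases_tail h with h | ⟨u, hdu, huc⟩
  · exact absurd h.symm hne
  · exact ⟨u, hdu, huc⟩

end Digraph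
end Causal
namespace Causal
namespace Digraph
variable {V : Type} {G : Digraph V}

/-- The single-vertex path. -/
def GPath.single (G : Digraph V) (v : V) : G.GPath where
  n := 0
  vert := fun _ => v
  inj := by omega
  adj := by omega

@[simp] lemma GPath.single_n (v : V) : (GPath.single G v).n = 0 := rfl
@[simp] lemma GPath.single_vert (v : V) (i : ℕ) : (GPath.single G v).vert i = v := rfl

/-- Drop the first `a` vertices of a path. -/
def GPath.drop (p : G.GPath) (a : ℕ) (ha : a ≤ p.n) : G.GPath where
  n := p.n - a
  vert := fun i => p.vert (a + min i (p.n - a))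
  inj := by
    intro i j hi hj h
    have := p.inj (a + min i (p.n - a)) (a + min j (p.n - a)) (by omega) (by omega) h
    omega
  adj := by
    intro i hi
    have h1 : a + min i (p.n - a) = a + i := by omega
    have h2 : a + min (i+1) (p.n - a) = (a + i) + 1 := by omega
    simp only [h1, h2]
    exact p.adj (a + i) (by omega)

lemma GPath.drop_n (p : G.GPath) (a : ℕ) (ha : a ≤ p.n) : (p.drop a ha).n = p.n - a := rfl

lemma GPath.drop_vert (p : G.GPath) (a : ℕ) (ha : a ≤ p.n) (i : ℕ) (hi : i ≤ p.n - a) :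
    (p.drop a ha).vert i = p.vert (a + i) := by
  simp only [GPath.drop]
  congr 1
  omega

lemma GPath.drop_first (p : G.GPath) (a : ℕ) (ha : a ≤ p.n) :
    (p.drop a ha).first = p.vert a := by
  simpa [GPath.first] using p.drop_vert a ha 0 (by omega)

lemma GPath.drop_last (p : G.GPath) (a : ℕ) (ha : a ≤ p.n) :
    (p.drop a ha).last = p.last := by
  have := p.drop_vert a ha (p.n - a) (le_refl _)
  simp only [GPath.last, GPath.drop_n]
  rw [this]
  congr 1
  omega

lemma GPath.drop_causal {p : G.GPath} (hc : p.Causal) (a : ℕ) (ha : a ≤ p.n) :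
    (p.drop a ha).Causal := by
  intro i hi
  rw [p.drop_vert a ha i (by simpa [GPath.drop_n] using hi.le),
    p.drop_vert a ha (i+1) (by simp [GPath.drop_n] at hi ⊢; omega)]
  rw [← Nat.add_assoc]
  exact hc (a + i) (by simp [GPath.drop_n] at hi; omega)

/-- Prepend a vertex to a path. -/
def GPath.cons (u : V) (p : G.GPath) (e : G.Edge u p.first ∨ G.Edge p.first u)
    (hu : ∀ i, i ≤ p.n → p.vert i ≠ u) : G.GPath where
  n := p.n + 1
  vert := fun i => if i = 0 then u else p.vert (i - 1)
  inj := by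
    intro i j hi hj h
    by_cases hi0 : i = 0 <;> by_cases hj0 : j = 0 <;> simp [hi0, hj0] at h ⊢
    · exact absurd h.symm (hu (j-1) (by omega))
    · exact absurd h (hu (i-1) (by omega))
    · have := p.inj (i-1) (j-1) (by omega) (by omega) h
      omega
  adj := by
    intro i hi
    by_cases hi0 : i = 0
    · subst hi0; simpa [GPath.first] using e
    · simp only [hi0, if_neg, if_neg (by omega : i + 1 ≠ 0)]
      have := p.adj (i-1) (by omega)
      have h1 : i + 1 - 1 = (i - 1) + 1 := by omega
      rw [h1]
      exact this

lemma GPath.cons_n (u : V) (p : G.GPath) (e) (hu) : (GPath.cons u p e hu).n = p.n + 1 := rfl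

lemma GPath.cons_vert_zero (u : V) (p : G.GPath) (e) (hu) : (GPath.cons u p e hu).vert 0 = u := rfl

lemma GPath.cons_vert_succ (u : V) (p : G.GPath) (e) (hu) (i : ℕ) :
    (GPath.cons u p e hu).vert (i + 1) = p.vert i := by
  simp [GPath.cons]

lemma GPath.cons_first (u : V) (p : G.GPath) (e) (hu) : (GPath.cons u p e hu).first = u := rfl

lemma GPath.cons_last (u : V) (p : G.GPath) (e) (hu) : (GPath.cons u p e hu).last = p.last := by
  simp only [GPath.last, GPath.cons_n]
  exact GPath.cons_vert_succ u p e hu p.n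

/-- A causal path visits only descendants of its first vertex. -/
lemma GPath.causal_anc {p : G.GPath} (hc : p.Causal) (i : ℕ) (hi : i ≤ p.n) :
    G.anc p.first (p.vert i) := by
  induction i with
  | zero => exact Relation.ReflTransGen.refl
  | succ k ih =>
    exact (ih (by omega)).tail (hc k (by omega))

/-- On a causal path in an acyclic graph there are no colliders. -/
lemma GPath.causal_no_collider (hG : G.Acyclic) {p : G.GPath} (hc : p.Causal) (i : ℕ) :
    ¬ p.IsCollider i := by
  rintro ⟨hi0, hin, -, h2⟩
  exact hG _ (Relation.TransGen.head (hc i hin) (Relation.TransGen.single h2))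

lemma GPath.cons_causal {u : V} {p : G.GPath} (hc : p.Causal) (e' : G.Edge u p.first)
    (e) (hu) : (GPath.cons u p e hu).Causal := by
  intro i hi
  by_cases hi0 : i = 0
  · subst hi0
    rw [GPath.cons_vert_zero, show (0:ℕ)+1 = 0+1 from rfl, GPath.cons_vert_succ]
    exact e'
  · rw [show i = (i-1)+1 by omega, GPath.cons_vert_succ, GPath.cons_vert_succ]
    exact hc (i-1) (by simp only [GPath.cons_n] at hi; omega)

/-- From reachability, a simple causal path. -/
lemma exists_causal_path {u v : V} (h : G.anc u v) :
    ∃ q : G.GPath, q.Causal ∧ q.first = u ∧ q.last = v := by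
  induction h using Relation.ReflTransGen.head_induction_on with
  | refl => exact ⟨GPath.single G v, fun i hi => absurd hi (Nat.not_lt_zero i), rfl, rfl⟩
  | @head a c e _ ih =>
    obtain ⟨q, hqc, hqf, hql⟩ := ih
    by_cases hmem : ∃ i, i ≤ q.n ∧ q.vert i = a
    · obtain ⟨i, hi, hvi⟩ := hmem
      exact ⟨q.drop i hi, q.drop_causal hqc i hi, by rw [q.drop_first i hi, hvi],
        by rw [q.drop_last i hi, hql]⟩
    · push_neg at hmem
      have e' : G.Edge a q.first := by rwa [hqf]
      exact ⟨GPath.cons a q (Or.inl e') hmem, GPath.cons_causal hqc e' _ hmem, rfl, by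
        rw [GPath.cons_last, hql]⟩

end Digraph
end Causal
namespace Causal
namespace Digraph
variable {V : Type} {G : Digraph V}

lemma not_blocked_drop (hG : G.Acyclic) {Mi Mk : V} {p : G.GPath}
    (hnb : ¬ p.Blocked (insert Mk (G.paSet Mk) \ {Mi}))
    (h0 : p.vert 0 = Mi)
    (hlast_ne : p.vert p.n ≠ Mk) (hlast_pa : p.vert p.n ∉ G.paSet Mk)
    {a : ℕ} (ha : 1 ≤ a) (han : a ≤ p.n) :
    ¬ (p.drop a han).Blocked (G.paSet Mk) := by
  set C : Set V := insert Mk (G.paSet Mk) \ {Mi} with hC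
  have hne_mi : ∀ j, 1 ≤ j → j ≤ p.n → p.vert j ≠ Mi := by
    intro j h1 h2 hj
    have := p.inj j 0 h2 (by omega) (by rw [hj, h0])
    omega
  have claim1 : ∀ j, 1 ≤ j → j ≤ p.n → p.vert j ≠ Mk := by
    intro j h1 h2 heq
    by_cases hjn : j = p.n
    · exact hlast_ne (hjn ▸ heq)
    have hjlt : j < p.n := lt_of_le_of_ne h2 hjn
    by_cases hcol : p.IsCollider j
    · have e2 : G.Edge (p.vert (j+1)) Mk := heq ▸ hcol.2.2.2
      by_cases hj1 : j + 1 = p.n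
      · exact hlast_pa (hj1 ▸ e2)
      · have hnc : ¬ p.IsCollider (j+1) := by
          rintro ⟨-, -, hL, -⟩
          rw [Nat.add_sub_cancel] at hL
          exact hG _ (Relation.TransGen.head hL (Relation.TransGen.single (heq ▸ hcol.2.2.2)))
        exact hnb (Or.inl ⟨j+1, by omega, by omega, hnc,
          ⟨Set.mem_insert_of_mem _ e2, hne_mi (j+1) (by omega) (by omega)⟩⟩)
    · exact hnb (Or.inl ⟨j, by omega, hjlt, hcol,
        ⟨heq ▸ Set.mem_insert _ _, hne_mi j h1 h2⟩⟩)
  intro hb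
  rcases hb with ⟨i, hi0, hiLT, hnc, hmem⟩ | ⟨i, hic, hnan⟩
  · rw [GPath.drop_n] at hiLT
    have hvm : (p.drop a han).vert (i-1) = p.vert ((a+i)-1) := by
      rw [p.drop_vert a han (i-1) (by omega)]; congr 1; omega
    have hv : (p.drop a han).vert i = p.vert (a+i) := p.drop_vert a han i (by omega)
    have hvp : (p.drop a han).vert (i+1) = p.vert ((a+i)+1) :=
      p.drop_vert a han (i+1) (by omega)
    have hcoliff : (p.drop a han).IsCollider i ↔ p.IsCollider (a+i) := by
      unfold GPath.IsCollider
      rw [hvm, hv, hvp, GPath.drop_n]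
      constructor <;> rintro ⟨-, -, h3, h4⟩ <;> exact ⟨by omega, by omega, h3, h4⟩
    rw [hv] at hmem
    exact hnb (Or.inl ⟨a+i, by omega, by omega, fun h => hnc (hcoliff.mpr h),
      ⟨Set.mem_insert_of_mem _ hmem, hne_mi (a+i) (by omega) (by omega)⟩⟩)
  · have hi0 : 0 < i := hic.1
    have hiLT : i < p.n - a := by have := hic.2.1; rwa [GPath.drop_n] at this
    have hvm : (p.drop a han).vert (i-1) = p.vert ((a+i)-1) := by
      rw [p.drop_vert a han (i-1) (by omega)]; congr 1; omega
    have hv : (p.drop a han).vert i = p.vert (a+i) := p.drop_vert a han i (by omega)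
    have hvp : (p.drop a han).vert (i+1) = p.vert ((a+i)+1) :=
      p.drop_vert a han (i+1) (by omega)
    have hpcol : p.IsCollider (a+i) := by
      obtain ⟨-, -, h3, h4⟩ := hic
      rw [hvm, hv] at h3
      rw [hvp, hv] at h4
      exact ⟨by omega, by omega, h3, h4⟩
    have hxan : p.vert (a+i) ∈ G.anOf C := by
      by_contra hx
      exact hnb (Or.inr ⟨a+i, hpcol, hx⟩)
    apply hnan
    rw [hv]
    rw [mem_anOf] at hxan ⊢
    obtain ⟨c, hcC, hanc⟩ := hxan
    obtain ⟨hcIn, -⟩ := hcC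
    rcases hcIn with hcMk | hcPa
    · subst hcMk
      obtain ⟨u, hxu, huMk⟩ := anc_decompose hanc (claim1 (a+i) (by omega) (by omega))
      exact ⟨u, huMk, hxu⟩
    · exact ⟨c, hcPa, hanc⟩

end Digraph
end Causal
namespace Causal

@[simp] lemma chainD_zero {V : Type} (Wj : V) (l : List V) : chainD Wj l 0 = Wj := rfl

@[simp] lemma chainD_succ {V : Type} (Wj : V) (l : List V) (t : ℕ) :
    chainD Wj l (t + 1) = l.getD t Wj := rfl

namespace Digraph
variable {V : Type} {G : Digraph V}

lemma topo_not_anc {S : Set V} {l : List V} (h : G.IsTopoOrd S l) (d : V) {i j : ℕ}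
    (hij : i < j) (hj : j < l.length) : ¬ G.anc (l.getD j d) (l.getD i d) := by
  have hp := List.pairwise_iff_get.mp h.2.2 ⟨i, by omega⟩ ⟨j, hj⟩ (by exact hij)
  rwa [List.getD_eq_getElem l d (by omega : i < l.length), List.getD_eq_getElem l d hj]

lemma topo_getD_mem {S : Set V} {l : List V} (h : G.IsTopoOrd S l) (d : V) {i : ℕ}
    (hi : i < l.length) : l.getD i d ∈ S := by
  rw [List.getD_eq_getElem l d hi]
  exact (h.2.1 _).mp (l.getElem_mem hi)

lemma topo_find {S : Set V} {l : List V} (h : G.IsTopoOrd S l) (d : V) {v : V} (hv : v ∈ S) :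
    ∃ r, r < l.length ∧ l.getD r d = v := by
  obtain ⟨i, hi, hiv⟩ := List.mem_iff_getElem.mp ((h.2.1 v).mpr hv)
  exact ⟨i, hi, by rwa [List.getD_eq_getElem l d hi]⟩

end Digraph
end Causal

open Causal in
/-- If `M_i ∈ M(G) \\ {Y}` fails the M-criterion, then one of the three
graphical configurations (M-a), (M-b), (M-c) holds in `G`. -/
theorem statement_14 {V : Type} [Fintype V]
    (G : Causal.Digraph V) (A Y : V) (hG : G.Acyclic) (hAY : A ≠ Y) (hA : G.anc A Y)
    (Mi : V) (hMi : Mi ∈ G.Mset A Y) (hMiY : Mi ≠ Y) (hfail : ¬ G.MCrit A Y Mi)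
    (l : List V) (hl : G.IsTopoOrd (G.chSet Mi ∩ G.Mset A Y) l) :
    (∃ m, m < l.length ∧ ∃ r, r < l.length ∧ m ≠ r ∧
      l.getD m Mi ∉ G.adjSet (l.getD r Mi)) ∨
    (∃ r, r < l.length ∧ ∃ B, B ∈ insert A (G.Oset A Y ∪ G.Mset A Y) ∧ B ≠ Mi ∧
      G.Edge Mi (l.getD r Mi) ∧ G.Edge B (l.getD r Mi) ∧ Mi ∉ G.adjSet B) ∨
    (∃ r, r < l.length ∧ ∃ B, B ∈ insert A (G.Oset A Y ∪ G.Mset A Y) ∧ B ≠ Mi ∧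
      G.Edge B Mi ∧ B ∉ insert (l.getD r Mi) (G.paSet (l.getD r Mi)) ∧
      ∃ p : G.GPath, p.first = B ∧
        p.last ∈ insert A (insert Y (G.Omin A Y)) \ G.paSet (l.getD r Mi) ∧
        ¬ p.Blocked (G.paSet (l.getD r Mi))) := by
  classical
  set S : Set V := G.chSet Mi ∩ G.Mset A Y with hSdef
  set T : Set V := insert A (insert Y (G.Omin A Y)) with hTdef
  obtain ⟨hMiA, hAMi, hMiYanc⟩ := hMi
  -- basic facts
  have hTY : ∀ s ∈ T, G.anc s Y := by
    rintro s hs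
    rcases hs with rfl | hs
    · exact hA
    rcases hs with rfl | hs
    · exact Relation.ReflTransGen.refl
    · exact Digraph.Oset_subset_ancY (Digraph.Omin_subset_Oset hs)
  have child_in_S : ∀ c, G.Edge Mi c → G.anc c Y → c ∈ S := by
    intro c e hcY
    refine ⟨e, ?_, hAMi.tail e, hcY⟩
    rintro rfl
    exact Digraph.acyc_no_anc_edge hG hAMi e
  have hS_chS : ∀ v ∈ S, G.Edge Mi v := fun v hv => hv.1
  have hS_M : ∀ v ∈ S, v ∈ G.Mset A Y := fun v hv => hv.2
  -- (M-a) dichotomy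
  by_cases hMa : ∃ m, m < l.length ∧ ∃ r, r < l.length ∧ m ≠ r ∧
      l.getD m Mi ∉ G.adjSet (l.getD r Mi)
  · exact Or.inl hMa
  right
  push_neg at hMa
  have hadj : ∀ u ∈ S, ∀ v ∈ S, u ≠ v → G.Edge u v ∨ G.Edge v u := by
    intro u hu v hv huv
    obtain ⟨m, hm, hmu⟩ := Digraph.topo_find hl Mi hu
    obtain ⟨r, hr, hrv⟩ := Digraph.topo_find hl Mi hv
    have hmr : m ≠ r := by rintro rfl; exact huv (hmu.symm.trans hrv)
    have := hMa m hm r hr hmr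
    rw [hmu, hrv] at this
    exact this
  -- unpack failure of the M-criterion
  obtain ⟨l₀, hfail₀⟩ := not_forall.mp hfail
  obtain ⟨hl₀, hnot⟩ := _root_.not_imp.mp hfail₀
  have hmem₀ : ∀ v, v ∈ l₀ ↔ v ∈ S := hl₀.2.1
  have hl₀ne : l₀ ≠ [] := by
    obtain ⟨c, e, hcY⟩ : ∃ c, G.Edge Mi c ∧ G.anc c Y := by
      rcases Relation.ReflTransGen.cases_head hMiYanc with h | ⟨c, e, h⟩
      · exact absurd h hMiY
      · exact ⟨c, e, h⟩
    intro hnil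
    have := (hmem₀ c).mpr (child_in_S c e hcY)
    simp [hnil] at this
  have hlen : 1 ≤ l₀.length := by
    cases l₀ with
    | nil => exact absurd rfl hl₀ne
    | cons a l => simp
  have hEdgeDir : ∀ i j, i < j → j < l₀.length →
      G.Edge (l₀.getD i Mi) (l₀.getD j Mi) := by
    intro i j hij hj
    have hne : l₀.getD i Mi ≠ l₀.getD j Mi := by
      intro h
      rw [List.getD_eq_getElem l₀ Mi (by omega : i < l₀.length),
        List.getD_eq_getElem l₀ Mi hj] at h
      have := (List.Nodup.getElem_inj_iff hl₀.1).mp h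
      omega
    rcases hadj _ (Digraph.topo_getD_mem hl₀ Mi (by omega)) _
        (Digraph.topo_getD_mem hl₀ Mi hj) hne with h | h
    · exact h
    · exact absurd (Digraph.anc_of_edge h) (Digraph.topo_not_anc hl₀ Mi hij hj)
  set Mk : V := chainD Mi l₀ l₀.length with hMkdef
  have hMkget : Mk = l₀.getD (l₀.length - 1) Mi := by
    have h := chainD_succ Mi l₀ (l₀.length - 1)
    rw [show l₀.length - 1 + 1 = l₀.length from by omega] at h
    exact h
  have hMkS : Mk ∈ S := by
    rw [hMkget]; exact Digraph.topo_getD_mem hl₀ Mi (by omega)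
  have hMiMk : G.Edge Mi Mk := hS_chS _ hMkS
  have hMkMi_ne : Mk ≠ Mi := by
    intro h
    rw [h] at hMiMk
    exact hG Mi (Relation.TransGen.single hMiMk)
  have hS_paMk : ∀ v ∈ S, v ≠ Mk → G.Edge v Mk := by
    intro v hv hne
    obtain ⟨i, hi, hiv⟩ := Digraph.topo_find hl₀ Mi hv
    have : i ≠ l₀.length - 1 := by
      rintro rfl; rw [← hiv] at hne; rw [hMkget] at hne; exact hne rfl
    rw [← hiv, hMkget]
    exact hEdgeDir i (l₀.length - 1) (by omega) (by omega)
  set Ck : Set V := insert Mk (G.paSet Mk) \ {Mi} with hCkdef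
  have hS_in_Ck : ∀ v ∈ S, v ∈ Ck := by
    intro v hv
    refine ⟨?_, ?_⟩
    · by_cases hvMk : v = Mk
      · exact hvMk ▸ Set.mem_insert _ _
      · exact Set.mem_insert_of_mem _ (hS_paMk v hv hvMk)
    · simp only [Set.mem_singleton_iff]
      rintro rfl
      exact hG v (Relation.TransGen.single (hS_chS v hv))
  have hCkY : ∀ c ∈ Ck, G.anc c Y := by
    rintro c ⟨hc, -⟩
    rcases hc with rfl | hc
    · exact (hS_M _ hMkS).2.2
    · exact (Relation.ReflTransGen.single hc).trans (hS_M _ hMkS).2.2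
  -- split on which conjunct fails
  have hsplit : ¬ G.dsep {Mi} T (insert (chainD Mi l₀ l₀.length)
        (G.paSet (chainD Mi l₀ l₀.length)) \ {Mi}) ∨
      ¬ (∀ t, t < l₀.length →
        G.Edge (chainD Mi l₀ t) (chainD Mi l₀ (t + 1)) ∧
        G.paSet (chainD Mi l₀ (t + 1)) ⊆
          insert (chainD Mi l₀ t) (G.paSet (chainD Mi l₀ t)) ∧
        G.dsep (G.paSet (chainD Mi l₀ t) \ G.paSet (chainD Mi l₀ (t + 1))) T
          (G.paSet (chainD Mi l₀ (t + 1)))) := by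
    by_contra hcon
    push_neg at hcon
    exact hnot ⟨hl₀ne, hcon.1, hcon.2⟩
  rcases hsplit with hP2 | hP3
  · -- ¬ dsep {Mi} T Ck : configuration (M-b) or (M-c)
    unfold Digraph.dsep at hP2
    push_neg at hP2
    obtain ⟨s0, hs0, t0, ht0, p, hpn, hpf, hpl, hpnb⟩ := hP2
    have h0 : p.vert 0 = Mi := hpf.trans hs0.1
    have hlastv : p.vert p.n = t0 := hpl
    have ht0T : t0 ∈ T := ht0.1
    have ht0C : t0 ∉ Ck := ht0.2
    have ht0Mk : t0 ≠ Mk := by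
      intro h
      exact ht0C (h ▸ ⟨Set.mem_insert _ _, by simpa using hMkMi_ne⟩)
    have ht0Mi : t0 ≠ Mi := by
      intro hh
      have := p.inj p.n 0 le_rfl (by omega) (by rw [hlastv, h0, hh])
      omega
    have ht0pa : t0 ∉ G.paSet Mk := by
      intro h
      exact ht0C ⟨Set.mem_insert_of_mem _ h, by simpa using ht0Mi⟩
    have hout_notCk : ∀ j, 0 < j → j ≤ p.n → G.Edge (p.vert j) (p.vert (j-1)) →
        p.vert j ∉ Ck := by
      intro j hj0 hjn he hin
      by_cases hjn' : j = p.n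
      · rw [hjn', hlastv] at hin
        exact ht0C hin
      · have hnc : ¬ p.IsCollider j := by
          rintro ⟨-, -, hL, -⟩
          exact hG _ (Relation.TransGen.head hL (Relation.TransGen.single he))
        exact hpnb (Or.inl ⟨j, hj0, by omega, hnc, hin⟩)
    rcases p.adj 0 (by omega) with hfw | hbw
    · -- first edge Mi → v1
      have heMiv1 : G.Edge Mi (p.vert 1) := by rw [← h0]; exact hfw
      have key : ∀ d j, j ≤ p.n → p.n - j = d → 0 < j →
          G.Edge (p.vert (j-1)) (p.vert j) → G.anc (p.vert j) Y := by
        intro d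
        induction d with
        | zero =>
          intro j hj hd _ _
          have hjn : j = p.n := by omega
          rw [hjn, hlastv]
          exact hTY t0 ht0T
        | succ d ih =>
          intro j hj hd hj0 hedge
          have hjlt : j < p.n := by omega
          by_cases hcol : p.IsCollider j
          · have hxan : p.vert j ∈ G.anOf Ck := by
              by_contra hx
              exact hpnb (Or.inr ⟨j, hcol, hx⟩)
            obtain ⟨c, hcC, hanc⟩ := Digraph.mem_anOf.mp hxan
            exact hanc.trans (hCkY c hcC)
          · have hfw2 : G.Edge (p.vert j) (p.vert (j+1)) := by
              rcases p.adj j hjlt with h | h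
              · exact h
              · exact absurd ⟨hj0, hjlt, hedge, h⟩ hcol
            exact (Relation.ReflTransGen.single hfw2).trans
              (ih (j+1) (by omega) (by omega) (by omega) (by simpa using hfw2))
      have hv1Y : G.anc (p.vert 1) Y := key (p.n - 1) 1 hpn rfl one_pos (by simpa using hfw)
      have hv1S : p.vert 1 ∈ S := child_in_S _ heMiv1 hv1Y
      have hv1Ck : p.vert 1 ∈ Ck := hS_in_Ck _ hv1S
      have h1lt : 1 < p.n := by
        rcases eq_or_lt_of_le hpn with h | h
        · exfalso
          apply ht0C
          rwa [← hlastv, ← h]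
        · exact h
      have hcol1 : p.IsCollider 1 := by
        by_contra hnc
        exact hpnb (Or.inl ⟨1, one_pos, h1lt, hnc, hv1Ck⟩)
      have hbw2 : G.Edge (p.vert 2) (p.vert 1) := hcol1.2.2.2
      have hBne : p.vert 2 ≠ Mi := by
        intro h
        have := p.inj 2 0 (by omega) (by omega) (by rw [h, h0])
        omega
      have hBCk : p.vert 2 ∉ Ck := hout_notCk 2 (by omega) (by omega) (by simpa using hbw2)
      have hv1M : p.vert 1 ∈ G.Mset A Y := hS_M _ hv1S
      by_cases e2 : G.Edge (p.vert 2) Mi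
      · have hBnotin : p.vert 2 ∉ insert Mk (G.paSet Mk) := fun h => hBCk ⟨h, by simpa using hBne⟩
        obtain ⟨r, hr, hrv⟩ := Digraph.topo_find hl Mi hMkS
        refine Or.inr ⟨r, hr, p.vert 2, Digraph.parent_mem_big ⟨hMiA, hAMi, hMiYanc⟩ e2,
          hBne, e2, ?_, ?_⟩
        · rw [hrv]; exact hBnotin
        · rw [hrv]
          refine ⟨p.drop 2 (by omega), p.drop_first 2 (by omega), ?_, ?_⟩
          · rw [p.drop_last 2 (by omega), hpl]
            exact ⟨ht0T, ht0pa⟩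
          · exact Digraph.not_blocked_drop hG hpnb h0 (by rw [hlastv]; exact ht0Mk)
              (by rw [hlastv]; exact ht0pa) (by omega) (by omega)
      · by_cases e1 : G.Edge Mi (p.vert 2)
        · exact absurd (hS_in_Ck _ (child_in_S _ e1
            (Digraph.anc_Y_of_parent_mset hv1M hbw2))) hBCk
        · obtain ⟨r, hr, hrv⟩ := Digraph.topo_find hl Mi hv1S
          refine Or.inl ⟨r, hr, p.vert 2, Digraph.parent_mem_big hv1M hbw2, hBne, ?_, ?_, ?_⟩
          · rw [hrv]; exact heMiv1
          · rw [hrv]; exact hbw2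
          · rintro (h | h)
            · exact e1 h
            · exact e2 h
    · -- first edge v1 → Mi : configuration (M-c)
      have heBMi : G.Edge (p.vert 1) Mi := by rw [← h0]; exact hbw
      have hBCk : p.vert 1 ∉ Ck := hout_notCk 1 one_pos hpn (by simpa using hbw)
      have hBMi : p.vert 1 ≠ Mi := by
        intro h
        rw [h] at heBMi
        exact hG Mi (Relation.TransGen.single heBMi)
      have hBnotin : p.vert 1 ∉ insert Mk (G.paSet Mk) := fun h => hBCk ⟨h, by simpa using hBMi⟩
      obtain ⟨r, hr, hrv⟩ := Digraph.topo_find hl Mi hMkS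
      refine Or.inr ⟨r, hr, p.vert 1, Digraph.parent_mem_big ⟨hMiA, hAMi, hMiYanc⟩ heBMi,
        hBMi, heBMi, ?_, ?_⟩
      · rw [hrv]; exact hBnotin
      · rw [hrv]
        refine ⟨p.drop 1 hpn, p.drop_first 1 hpn, ?_, ?_⟩
        · rw [p.drop_last 1 hpn, hpl]
          exact ⟨ht0T, ht0pa⟩
        · exact Digraph.not_blocked_drop hG hpnb h0 (by rw [hlastv]; exact ht0Mk)
            (by rw [hlastv]; exact ht0pa) le_rfl hpn
  · -- some step condition fails
    have hex : ∃ t, t < l₀.length ∧ ¬ (G.Edge (chainD Mi l₀ t) (chainD Mi l₀ (t + 1)) ∧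
        G.paSet (chainD Mi l₀ (t + 1)) ⊆
          insert (chainD Mi l₀ t) (G.paSet (chainD Mi l₀ t)) ∧
        G.dsep (G.paSet (chainD Mi l₀ t) \ G.paSet (chainD Mi l₀ (t + 1))) T
          (G.paSet (chainD Mi l₀ (t + 1)))) := by
      by_contra hc
      rw [not_exists] at hc
      refine hP3 (fun t ht => ?_)
      by_contra hq
      exact hc t ⟨ht, hq⟩
    set t₀ := Nat.find hex with ht₀def
    obtain ⟨ht₀len, hQ₀⟩ := Nat.find_spec hex
    have hQbelow : ∀ u, u < t₀ → (G.Edge (chainD Mi l₀ u) (chainD Mi l₀ (u + 1)) ∧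
        G.paSet (chainD Mi l₀ (u + 1)) ⊆
          insert (chainD Mi l₀ u) (G.paSet (chainD Mi l₀ u)) ∧
        G.dsep (G.paSet (chainD Mi l₀ u) \ G.paSet (chainD Mi l₀ (u + 1))) T
          (G.paSet (chainD Mi l₀ (u + 1)))) := by
      intro u hu
      have hmin := Nat.find_min hex hu
      by_contra hq
      exact hmin ⟨by omega, hq⟩
    have hchainS : ∀ t, t < l₀.length → chainD Mi l₀ (t + 1) ∈ S := by
      intro t ht
      rw [chainD_succ]
      exact Digraph.topo_getD_mem hl₀ Mi ht
    have hchain_mem : ∀ t, 1 ≤ t → t ≤ l₀.length → chainD Mi l₀ t ∈ S := by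
      intro t h1 h2
      have h := chainD_succ Mi l₀ (t - 1)
      rw [show t - 1 + 1 = t from by omega] at h
      rw [h]
      exact Digraph.topo_getD_mem hl₀ Mi (by omega)
    have hQa : ∀ t, t < l₀.length → G.Edge (chainD Mi l₀ t) (chainD Mi l₀ (t + 1)) := by
      intro t ht
      cases t with
      | zero => exact hS_chS _ (hchainS 0 ht)
      | succ u =>
        rw [chainD_succ, chainD_succ]
        exact hEdgeDir u (u + 1) (by omega) ht
    have hchS : chainD Mi l₀ (t₀ + 1) ∈ S := hchainS t₀ ht₀len
    have hchM : chainD Mi l₀ (t₀ + 1) ∈ G.Mset A Y := hS_M _ hchS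
    by_cases hb : G.paSet (chainD Mi l₀ (t₀ + 1)) ⊆
        insert (chainD Mi l₀ t₀) (G.paSet (chainD Mi l₀ t₀))
    · -- the d-separation condition fails
      have hc : ¬ G.dsep (G.paSet (chainD Mi l₀ t₀) \ G.paSet (chainD Mi l₀ (t₀ + 1))) T
          (G.paSet (chainD Mi l₀ (t₀ + 1))) := by
        intro h
        exact hQ₀ ⟨hQa t₀ ht₀len, hb, h⟩
      unfold Digraph.dsep at hc
      push_neg at hc
      obtain ⟨B, hB, s0, hs0, p, hpn, hpf, hpl, hpnb⟩ := hc
      have hBpa_t : B ∈ G.paSet (chainD Mi l₀ t₀) := hB.1.1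
      have hBnpa : B ∉ G.paSet (chainD Mi l₀ (t₀ + 1)) := hB.2
      have hchain_sub : ∀ t, t ≤ t₀ → ∀ x ∈ G.paSet (chainD Mi l₀ t),
          x ∈ G.paSet Mi ∨ ∃ s, s < t ∧ x = chainD Mi l₀ s := by
        intro t
        induction t with
        | zero => intro _ x hx; exact Or.inl hx
        | succ u ih =>
          intro hu x hx
          have hsub := (hQbelow u (by omega)).2.1
          rcases Set.mem_insert_iff.mp (hsub hx) with h | h
          · exact Or.inr ⟨u, by omega, h⟩
          · rcases ih (by omega) x h with h' | ⟨s, hs, h'⟩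
            · exact Or.inl h'
            · exact Or.inr ⟨s, by omega, h'⟩
      rcases hchain_sub t₀ le_rfl B hBpa_t with hBMi | ⟨s, hs, hBs⟩
      · have hBne : B ≠ Mi := by
          intro h
          rw [h] at hBMi
          exact hG Mi (Relation.TransGen.single hBMi)
        obtain ⟨r, hr, hrv⟩ := Digraph.topo_find hl Mi hchS
        refine Or.inr ⟨r, hr, B, Digraph.parent_mem_big ⟨hMiA, hAMi, hMiYanc⟩ hBMi,
          hBne, hBMi, ?_, ?_⟩
        · rw [hrv]
          intro h
          rcases Set.mem_insert_iff.mp h with h' | h'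
          · apply hG Mi
            refine Relation.TransGen.head ?_ (Relation.TransGen.single hBMi)
            rw [h']
            exact hS_chS _ hchS
          · exact hBnpa h'
        · rw [hrv]
          exact ⟨p, hpf, by rw [hpl]; exact hs0, hpnb⟩
      · exfalso
        cases s with
        | zero =>
          rw [chainD_zero] at hBs
          exact hBnpa (hBs ▸ hS_chS _ hchS)
        | succ u =>
          rw [chainD_succ] at hBs
          apply hBnpa
          rw [hBs, chainD_succ]
          exact hEdgeDir u t₀ (by omega) ht₀len
    · -- the parent-subset condition fails
      obtain ⟨B, hBpa, hBnot⟩ := Set.not_subset.mp hb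
      have hBne_ch : B ≠ chainD Mi l₀ t₀ := fun h => hBnot (h ▸ Set.mem_insert _ _)
      have hBnp : B ∉ G.paSet (chainD Mi l₀ t₀) := fun h => hBnot (Set.mem_insert_of_mem _ h)
      have hBneMi : B ≠ Mi := by
        intro h
        rcases Nat.eq_zero_or_pos t₀ with h0 | hpos
        · apply hBne_ch
          rw [h, h0, chainD_zero]
        · apply hBnp
          rw [h]
          exact hS_chS _ (hchain_mem t₀ hpos (by omega))
      by_cases e2 : G.Edge B Mi
      · -- B → Mi : contradiction with an earlier d-separation condition
        exfalso
        have hexs : ∃ u, B ∉ G.paSet (chainD Mi l₀ u) := ⟨t₀, hBnp⟩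
        set s' := Nat.find hexs with hs'def
        have hs'spec : B ∉ G.paSet (chainD Mi l₀ s') := Nat.find_spec hexs
        have hs'pos : 1 ≤ s' := by
          rcases Nat.eq_zero_or_pos s' with h | h
          · exfalso
            apply hs'spec
            rw [h, chainD_zero]
            exact e2
          · exact h
        have hs'le : s' ≤ t₀ := Nat.find_le hBnp
        have hss : s' - 1 + 1 = s' := by omega
        have hmem_prev : B ∈ G.paSet (chainD Mi l₀ (s' - 1)) := by
          by_contra h
          exact Nat.find_min hexs (show s' - 1 < s' by omega) h
        have hdsep := (hQbelow (s' - 1) (by omega)).2.2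
        rw [hss] at hdsep
        obtain ⟨q, hqc, hqf, hql⟩ := Digraph.exists_causal_path (G := G) hchM.2.2
        have hqne : ∀ i, i ≤ q.n → q.vert i ≠ B := by
          intro i hi h
          have hanc : G.anc (chainD Mi l₀ (t₀ + 1)) (q.vert i) := by
            have h1 := Digraph.GPath.causal_anc hqc i hi
            rwa [hqf] at h1
          rw [h] at hanc
          exact Digraph.acyc_no_anc_edge hG hanc hBpa
        have heBq : G.Edge B q.first := by rw [hqf]; exact hBpa
        have hrpc : (Digraph.GPath.cons B q (Or.inl heBq) hqne).Causal :=
          Digraph.GPath.cons_causal hqc heBq _ hqne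
        have hcs : chainD Mi l₀ s' = l₀.getD (s' - 1) Mi := by
          have h := chainD_succ Mi l₀ (s' - 1)
          rwa [hss] at h
        have hint : ∀ i, i ≤ q.n → q.vert i ∉ G.paSet (chainD Mi l₀ s') := by
          intro i hi hmem
          have hanc : G.anc (chainD Mi l₀ (t₀ + 1)) (chainD Mi l₀ s') := by
            have h1 := Digraph.GPath.causal_anc hqc i hi
            rw [hqf] at h1
            exact h1.tail hmem
          rw [chainD_succ, hcs] at hanc
          exact Digraph.topo_not_anc hl₀ Mi (show s' - 1 < t₀ by omega) ht₀len hanc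
        have hs'S : chainD Mi l₀ s' ∈ S := hchain_mem s' hs'pos (by omega)
        have hYnp : Y ∉ G.paSet (chainD Mi l₀ s') := by
          intro h
          exact Digraph.acyc_no_anc_edge hG (hS_M _ hs'S).2.2 h
        have hYT : Y ∈ T := Set.mem_insert_of_mem _ (Set.mem_insert _ _)
        have hblocked := hdsep B ⟨⟨hmem_prev, hs'spec⟩, hs'spec⟩ Y ⟨hYT, hYnp⟩
          (Digraph.GPath.cons B q (Or.inl heBq) hqne)
          (by rw [Digraph.GPath.cons_n]; omega)
          (Digraph.GPath.cons_first B q _ _)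
          (by rw [Digraph.GPath.cons_last, hql])
        rcases hblocked with ⟨i, hi0, hin, hnc, hmemC⟩ | ⟨i, hic, -⟩
        · have hveq : (Digraph.GPath.cons B q (Or.inl heBq) hqne).vert i = q.vert (i - 1) := by
            rw [show i = (i - 1) + 1 from by omega]
            exact Digraph.GPath.cons_vert_succ B q _ _ (i - 1)
          rw [hveq] at hmemC
          rw [Digraph.GPath.cons_n] at hin
          exact hint (i - 1) (by omega) hmemC
        · exact Digraph.GPath.causal_no_collider hG hrpc i hic
      · by_cases e1 : G.Edge Mi B
        · -- Mi → B : contradiction with the topological ordering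
          exfalso
          have hBY : G.anc B Y := Digraph.anc_Y_of_parent_mset hchM hBpa
          have hBS : B ∈ S := child_in_S B e1 hBY
          obtain ⟨j, hj, hjv⟩ := Digraph.topo_find hl₀ Mi hBS
          have hBedge : G.Edge (l₀.getD j Mi) (l₀.getD t₀ Mi) := by
            rw [hjv]
            rw [chainD_succ] at hBpa
            exact hBpa
          have hjt : j < t₀ := by
            rcases lt_trichotomy j t₀ with h | h | h
            · exact h
            · exfalso
              rw [h] at hBedge
              exact hG _ (Relation.TransGen.single hBedge)
            · exact absurd (Digraph.anc_of_edge hBedge) (Digraph.topo_not_anc hl₀ Mi h hj)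
          have hct : chainD Mi l₀ t₀ = l₀.getD (t₀ - 1) Mi := by
            have h := chainD_succ Mi l₀ (t₀ - 1)
            rwa [show t₀ - 1 + 1 = t₀ from by omega] at h
          have hjne : j ≠ t₀ - 1 := by
            intro h
            apply hBne_ch
            rw [← hjv, h, hct]
          apply hBnp
          rw [hct, ← hjv]
          exact hEdgeDir j (t₀ - 1) (by omega) (by omega)
        · -- (M-b)
          obtain ⟨r, hr, hrv⟩ := Digraph.topo_find hl Mi hchS
          refine Or.inl ⟨r, hr, B, Digraph.parent_mem_big hchM hBpa, hBneMi, ?_, ?_, ?_⟩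
          · rw [hrv]
            exact hS_chS _ hchS
          · rw [hrv]
            exact hBpa
          · rintro (h | h)
            · exact e1 h
            · exact e2 h
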